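/- Let Γ be a real p×p matrix and μ ∈ R^p. Then μ^T Γ μ ≤ sqrt(μ^T (Γ Γ^T)^{1/2} μ) · sqrt(μ^T (Γ^T Γ)^{1/2} μ), where (·)^{1/2} denotes the positive semidefinite square root. -/

import Mathlib

open Matrix
noncomputable def Matrix.PosSemidef.sqrt {n 𝕜 : Type*} [Fintype n] [RCLike 𝕜] [DecidableEq n]
    [PartialOrder 𝕜] [StarOrderedRing 𝕜] {M : Matrix n n 𝕜} (hA : M.PosSemidef) : Matrix n n 𝕜 :=
  hA.1.eigenvectorUnitary.1 * diagonal ((↑) ∘ (Real.sqrt ∘ hA.1.eigenvalues)) *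
  (star hA.1.eigenvectorUnitary : Matrix n n 𝕜)

open scoped MatrixOrder in
lemma psd_sqrt_eq_cfc {p : ℕ} {M : Matrix (Fin p) (Fin p) ℝ} (hM : M.PosSemidef) :
    hM.sqrt = CFC.sqrt M := by
  rw [CFC.sqrt_eq_cfc, cfc_nnreal_eq_real _ M, hM.1.cfc_eq]
  simp only [IsHermitian.cfc, Matrix.PosSemidef.sqrt, Unitary.conjStarAlgAut_apply,
    Real.coe_sqrt, Real.coe_toNNReal']
  congr 3
  funext i
  simp [max_eq_left (hM.eigenvalues_nonneg i)]

open scoped MatrixOrder in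
lemma eq_sqrt_aux {p : ℕ} {A M : Matrix (Fin p) (Fin p) ℝ} (hA : A.PosSemidef)
    (hM : M.PosSemidef) (h : A ^ 2 = M) : A = hM.sqrt := by
  rw [psd_sqrt_eq_cfc]
  exact (CFC.sqrt_unique (by rw [← sq]; exact h) hA.nonneg).symm

/-- Cauchy–Schwarz step: given an SVD-style decomposition `Γ = U * diagonal s * Vᵀ`
with the two psd square roots identified, conclude the inequality. -/
lemma aux9 {p : ℕ} (Γ U V : Matrix (Fin p) (Fin p) ℝ) (s : Fin p → ℝ)
    (hs : ∀ i, 0 ≤ s i)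
    (hΓ : Γ = U * Matrix.diagonal s * Vᵀ)
    (h1 : (Γ * Γᵀ).PosSemidef) (h2 : (Γᵀ * Γ).PosSemidef)
    (hA : h1.sqrt = U * Matrix.diagonal s * Uᵀ)
    (hB : h2.sqrt = V * Matrix.diagonal s * Vᵀ)
    (μ : Fin p → ℝ) :
    μ ⬝ᵥ (Γ *ᵥ μ) ≤
      Real.sqrt (μ ⬝ᵥ (h1.sqrt *ᵥ μ)) * Real.sqrt (μ ⬝ᵥ (h2.sqrt *ᵥ μ)) := by
  have key : ∀ (W Z : Matrix (Fin p) (Fin p) ℝ),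
      μ ⬝ᵥ ((W * Matrix.diagonal s * Zᵀ) *ᵥ μ)
        = ∑ i, s i * ((Wᵀ *ᵥ μ) i * (Zᵀ *ᵥ μ) i) := by
    intro W Z
    rw [← mulVec_mulVec, ← mulVec_mulVec, dotProduct_mulVec, ← Matrix.mulVec_transpose]
    simp only [dotProduct, mulVec_diagonal]
    exact Finset.sum_congr rfl fun i _ => by ring
  rw [hA, hB, key U U, key V V]
  conv_lhs => rw [hΓ]
  rw [key U V]
  set y := Uᵀ *ᵥ μ
  set x := Vᵀ *ᵥ μ
  calc ∑ i, s i * (y i * x i)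
      = ∑ i, (Real.sqrt (s i) * y i) * (Real.sqrt (s i) * x i) := by
        refine Finset.sum_congr rfl fun i _ => ?_
        rw [show (Real.sqrt (s i) * y i) * (Real.sqrt (s i) * x i)
            = (Real.sqrt (s i) * Real.sqrt (s i)) * (y i * x i) by ring,
          Real.mul_self_sqrt (hs i)]
    _ ≤ Real.sqrt (∑ i, (Real.sqrt (s i) * y i) ^ 2)
          * Real.sqrt (∑ i, (Real.sqrt (s i) * x i) ^ 2) :=
        Real.sum_mul_le_sqrt_mul_sqrt _ _ _
    _ = Real.sqrt (∑ i, s i * (y i * y i)) * Real.sqrt (∑ i, s i * (x i * x i)) := by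
        congr 1 <;> · congr 1
                      refine Finset.sum_congr rfl fun i _ => ?_
                      rw [mul_pow, Real.sq_sqrt (hs i)]; ring

/-- Cauchy–Schwarz-type bound
`μᵀ Γ μ ≤ sqrt(μᵀ (ΓΓᵀ)^{1/2} μ) * sqrt(μᵀ (ΓᵀΓ)^{1/2} μ)`. -/
theorem stmt9 {p : ℕ} (Γ : Matrix (Fin p) (Fin p) ℝ) (μ : Fin p → ℝ)
    (h1 : (Γ * Γᵀ).PosSemidef) (h2 : (Γᵀ * Γ).PosSemidef) :
    μ ⬝ᵥ (Γ *ᵥ μ) ≤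
      Real.sqrt (μ ⬝ᵥ (h1.sqrt *ᵥ μ)) * Real.sqrt (μ ⬝ᵥ (h2.sqrt *ᵥ μ)) := by
  classical
  set d : Fin p → ℝ := h2.1.eigenvalues with hd
  set V : Matrix (Fin p) (Fin p) ℝ := (h2.1.eigenvectorUnitary : Matrix (Fin p) (Fin p) ℝ) with hVdef
  have hdnn : ∀ i, 0 ≤ d i := h2.eigenvalues_nonneg
  -- orthogonality of V
  have hVmem := (h2.1.eigenvectorUnitary).2
  have hstar : star V = Vᵀ := by
    rw [Matrix.star_eq_conjTranspose, Matrix.conjTranspose_eq_transpose_of_trivial]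
  have hVV : V * Vᵀ = 1 := by
    have := (Matrix.mem_unitaryGroup_iff).mp hVmem
    rwa [hstar] at this
  have hVV' : Vᵀ * V = 1 := by
    have := (Matrix.mem_unitaryGroup_iff').mp hVmem
    rwa [hstar] at this
  -- spectral theorem
  have hspec : Γᵀ * Γ = V * Matrix.diagonal d * Vᵀ := by
    have := h2.1.spectral_theorem
    rwa [Unitary.conjStarAlgAut_apply, hstar, RCLike.ofReal_real_eq_id, Function.id_comp] at this
  have hNN : Vᵀ * (Γᵀ * Γ) * V = Matrix.diagonal d := by
    rw [hspec]
    calc Vᵀ * (V * Matrix.diagonal d * Vᵀ) * V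
        = (Vᵀ * V) * Matrix.diagonal d * (Vᵀ * V) := by
          simp only [Matrix.mul_assoc]
      _ = Matrix.diagonal d := by rw [hVV']; simp
  -- definitions
  set s : Fin p → ℝ := fun i => Real.sqrt (d i) with hsdef
  have hsnn : ∀ i, 0 ≤ s i := fun i => Real.sqrt_nonneg _
  have hss : ∀ i, s i * s i = d i := fun i => Real.mul_self_sqrt (hdnn i)
  set e : Fin p → ℝ := fun i => if d i = 0 then 0 else (s i)⁻¹ with hedef
  set c : Fin p → ℝ := fun i => if d i = 0 then 1 else 0 with hcdef
  have hsne : ∀ i, d i ≠ 0 → s i ≠ 0 := by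
    intro i hi
    simpa [hsdef] using Real.sqrt_ne_zero'.mpr (lt_of_le_of_ne (hdnn i) (Ne.symm hi))
  set U : Matrix (Fin p) (Fin p) ℝ := Γ * V * Matrix.diagonal e with hUdef
  -- N := Γ * V ; NᵀN = diagonal d
  have hNtN : (Γ * V)ᵀ * (Γ * V) = Matrix.diagonal d := by
    rw [Matrix.transpose_mul]
    calc Vᵀ * Γᵀ * (Γ * V) = Vᵀ * (Γᵀ * Γ) * V := by simp only [Matrix.mul_assoc]
      _ = Matrix.diagonal d := hNN
  -- kernel columns vanish
  have hker : Γ * V * Matrix.diagonal c = 0 := by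
    have hzero : ((Γ * V * Matrix.diagonal c))ᴴ * (Γ * V * Matrix.diagonal c) = 0 := by
      rw [Matrix.conjTranspose_eq_transpose_of_trivial, Matrix.transpose_mul,
        Matrix.diagonal_transpose]
      calc Matrix.diagonal c * (Γ * V)ᵀ * (Γ * V * Matrix.diagonal c)
          = Matrix.diagonal c * ((Γ * V)ᵀ * (Γ * V)) * Matrix.diagonal c := by
            simp only [Matrix.mul_assoc]
        _ = Matrix.diagonal (fun i => c i * d i * c i) := by
            rw [hNtN, Matrix.diagonal_mul_diagonal, Matrix.diagonal_mul_diagonal]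
        _ = 0 := by
            have hz : (fun i => c i * d i * c i) = (fun _ => (0 : ℝ)) := by
              funext i
              by_cases h : d i = 0 <;> simp [hcdef, h]
            rw [hz]
            exact Matrix.diagonal_zero
    exact Matrix.conjTranspose_mul_self_eq_zero.mp hzero
  have hchi : Γ * V * Matrix.diagonal (fun i => e i * s i) = Γ * V := by
    have h1' : (fun i => e i * s i) = fun i => 1 - c i := by
      funext i
      by_cases h : d i = 0
      · simp [hedef, hcdef, h]
      · simp [hedef, hcdef, h, inv_mul_cancel₀ (hsne i h)]
    rw [h1']
    have : Matrix.diagonal (fun i => 1 - c i) = 1 - Matrix.diagonal c := by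
      rw [← Matrix.diagonal_one, ← Matrix.diagonal_sub]
    rw [this, Matrix.mul_sub, Matrix.mul_one, hker, sub_zero]
  -- Γ = U diag s Vᵀ
  have hGamma : Γ = U * Matrix.diagonal s * Vᵀ := by
    calc Γ = Γ * V * Vᵀ := by rw [Matrix.mul_assoc, hVV, Matrix.mul_one]
      _ = Γ * V * Matrix.diagonal (fun i => e i * s i) * Vᵀ := by rw [hchi]
      _ = U * Matrix.diagonal s * Vᵀ := by
          rw [hUdef]
          simp only [Matrix.mul_assoc, Matrix.diagonal_mul_diagonal]
  -- UᵀU = diagonal χ with χ = e*d*e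
  have hUtU : Uᵀ * U = Matrix.diagonal (fun i => e i * d i * e i) := by
    rw [hUdef, Matrix.transpose_mul, Matrix.diagonal_transpose]
    calc Matrix.diagonal e * (Γ * V)ᵀ * (Γ * V * Matrix.diagonal e)
        = Matrix.diagonal e * ((Γ * V)ᵀ * (Γ * V)) * Matrix.diagonal e := by
          simp only [Matrix.mul_assoc]
      _ = Matrix.diagonal (fun i => e i * d i * e i) := by
          rw [hNtN, Matrix.diagonal_mul_diagonal, Matrix.diagonal_mul_diagonal]
  have hpoint : ∀ i, s i * (e i * d i * e i) * s i = d i := by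
    intro i
    by_cases h : d i = 0
    · simp [hedef, h]
    · have hsi := hsne i h
      simp only [hedef, if_neg h]
      rw [show s i * ((s i)⁻¹ * d i * (s i)⁻¹) * s i
          = ((s i)⁻¹ * s i) * (((s i)⁻¹ * s i) * d i) from by ring,
        inv_mul_cancel₀ hsi, one_mul, one_mul]
  have hpoint2 : ∀ i, e i * d i * e i = e i * s i := by
    intro i
    by_cases h : d i = 0
    · simp [hedef, h]
    · have hsi := hsne i h
      simp only [hedef, if_neg h]
      rw [← hss i, show (s i)⁻¹ * (s i * s i) * (s i)⁻¹
          = ((s i)⁻¹ * s i) * (s i * (s i)⁻¹) from by ring,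
        inv_mul_cancel₀ hsi, mul_inv_cancel₀ hsi, one_mul]
  -- identify h2.sqrt
  have hBpsd : (V * Matrix.diagonal s * Vᵀ).PosSemidef := by
    have := (Matrix.posSemidef_diagonal_iff.mpr hsnn).mul_mul_conjTranspose_same V
    rwa [Matrix.conjTranspose_eq_transpose_of_trivial] at this
  have hB : h2.sqrt = V * Matrix.diagonal s * Vᵀ := by
    refine (eq_sqrt_aux hBpsd h2 ?_).symm
    rw [pow_two]
    calc V * Matrix.diagonal s * Vᵀ * (V * Matrix.diagonal s * Vᵀ)
        = V * Matrix.diagonal s * (Vᵀ * V) * Matrix.diagonal s * Vᵀ := by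
          simp only [Matrix.mul_assoc]
      _ = V * Matrix.diagonal d * Vᵀ := by
          rw [hVV', Matrix.mul_one, Matrix.mul_assoc V, Matrix.diagonal_mul_diagonal]
          simp only [hss]
      _ = Γᵀ * Γ := hspec.symm
  -- identify h1.sqrt
  have hApsd : (U * Matrix.diagonal s * Uᵀ).PosSemidef := by
    have := (Matrix.posSemidef_diagonal_iff.mpr hsnn).mul_mul_conjTranspose_same U
    rwa [Matrix.conjTranspose_eq_transpose_of_trivial] at this
  have hA : h1.sqrt = U * Matrix.diagonal s * Uᵀ := by
    refine (eq_sqrt_aux hApsd h1 ?_).symm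
    rw [pow_two]
    have hmid : Matrix.diagonal s * (Uᵀ * U) * Matrix.diagonal s = Matrix.diagonal d := by
      rw [hUtU, Matrix.diagonal_mul_diagonal, Matrix.diagonal_mul_diagonal]
      rw [show (fun i => s i * (e i * d i * e i) * s i) = d from funext hpoint]
    have hUdU : U * Matrix.diagonal d * Uᵀ = Γ * Γᵀ := by
      rw [hUdef]
      calc Γ * V * Matrix.diagonal e * Matrix.diagonal d * (Γ * V * Matrix.diagonal e)ᵀ
          = Γ * V * (Matrix.diagonal e * Matrix.diagonal d * Matrix.diagonal e)
              * (Γ * V)ᵀ := by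
            rw [Matrix.transpose_mul, Matrix.diagonal_transpose]
            simp only [Matrix.mul_assoc]
        _ = Γ * V * Matrix.diagonal (fun i => e i * s i) * (Γ * V)ᵀ := by
            rw [Matrix.diagonal_mul_diagonal, Matrix.diagonal_mul_diagonal]
            rw [show (fun i => e i * d i * e i) = fun i => e i * s i from funext hpoint2]
        _ = Γ * V * (Γ * V)ᵀ := by rw [hchi]
        _ = Γ * (V * Vᵀ) * Γᵀ := by
            rw [Matrix.transpose_mul]; simp only [Matrix.mul_assoc]
        _ = Γ * Γᵀ := by rw [hVV, Matrix.mul_one]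
    calc U * Matrix.diagonal s * Uᵀ * (U * Matrix.diagonal s * Uᵀ)
        = U * (Matrix.diagonal s * (Uᵀ * U) * Matrix.diagonal s) * Uᵀ := by
          simp only [Matrix.mul_assoc]
      _ = U * Matrix.diagonal d * Uᵀ := by rw [hmid]
      _ = Γ * Γᵀ := hUdU
  exact aux9 Γ U V s hsnn hGamma h1 h2 hA hB μ
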